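/- arXiv:2209.08186 — 2 statements merged into one kernel-verified Lean document; each statement's English description precedes it below -/
import Mathlib

section
/- Let d ≥ 2 be an integer, let s be a positive integer, let n ∈ ℕ and let 0 ≤ m ≤ n. Set h(t) = J_{n−m}^{(2m+d−2, −s)}(1−2t) · t^m. Then the identity t²(1−t) h″(t) + t(d−1−(d−s)t) h′(t) − m(m+d−2) h(t) = −n(n+d−s−1) · t · h(t) holds for all real t if and only if m ≤ n−s or m = n. (Equivalently, the Sobolev orthogonal polynomials S_{m,Y}^{n,(−1,−s)}(x,t) = J_{n−m}^{(2m+d−2,−s)}(1−2t) Y(x), Y a solid harmonic of degree m, are eigenfunctions of the operator D_{−s} with eigenvalue −n(n+d−s−1) exactly when m ≤ n−s or m = n.) -/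
open MeasureTheory Finset Polynomial

noncomputable section

/-- Pochhammer symbol `(x)_k`. -/
def poch (x : ℝ) (k : ℕ) : ℝ := (ascPochhammer ℝ k).eval x

/-- Jacobi polynomial `P_n^{(a,b)}` for real parameters. -/
def jacobiP (a b : ℝ) (n : ℕ) (t : ℝ) : ℝ :=
  (poch (a + 1) n / (n.factorial : ℝ)) *
    ∑ k ∈ Finset.range (n + 1),
      poch (-(n : ℝ)) k * poch ((n : ℝ) + a + b + 1) k /
        ((k.factorial : ℝ) * poch (a + 1) k) * ((1 - t) / 2) ^ k

/-- Normalizing constant `A_n^{(a,b)}`. -/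
def jacobiA (a b : ℝ) (n : ℕ) : ℝ := 2 ^ n / poch ((n : ℝ) + a + b + 1) n

/-- Normalized Jacobi polynomial `P̂_n^{(a,b)}`. -/
def jacobiPhat (a b : ℝ) (n : ℕ) (t : ℝ) : ℝ := jacobiA a b n * jacobiP a b n t

/-- The polynomials `J_n^{(a-s,b-s)}` (defined from the parameters `a, b > -1`). -/
def jacobiJ (a b : ℝ) (s n : ℕ) (t : ℝ) : ℝ :=
  if n < s then (1 + t) ^ n / (n.factorial : ℝ)
  else ∫ u in (-1 : ℝ)..t, (t - u) ^ (s - 1) / ((s - 1).factorial : ℝ) * jacobiPhat a b (n - s) u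

/-- The polynomials `J_n^{(a,-s)}`, built from `P̂^{(a+s,0)}`. -/
def jacobiJneg (a : ℝ) (s n : ℕ) (t : ℝ) : ℝ := jacobiJ (a + s) 0 s n t



/-- the key reduction: the eigen-equation holds for all `t` iff a polynomial identity holds,
provided the function is the evaluation of the polynomial `Hp`. -/
lemma key_iff (d s n m : ℕ) (Hp : Polynomial ℝ)
    (hfun : ∀ u : ℝ, jacobiJneg (2 * m + d - 2) s (n - m) (1 - 2 * u) * u ^ m = eval u Hp) :
    (∀ t : ℝ,
      t ^ 2 * (1 - t) *
            deriv (deriv (fun u => jacobiJneg (2 * m + d - 2) s (n - m) (1 - 2 * u) * u ^ m)) t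
          + t * ((d : ℝ) - 1 - ((d : ℝ) - s) * t) *
              deriv (fun u => jacobiJneg (2 * m + d - 2) s (n - m) (1 - 2 * u) * u ^ m) t
          - (m : ℝ) * ((m : ℝ) + d - 2) *
              (jacobiJneg (2 * m + d - 2) s (n - m) (1 - 2 * t) * t ^ m)
        = -(n : ℝ) * ((n : ℝ) + d - s - 1) * t *
            (jacobiJneg (2 * m + d - 2) s (n - m) (1 - 2 * t) * t ^ m))
    ↔ (X^2 * (1 - X) * derivative (derivative Hp)
        + X * (C ((d:ℝ) - 1) - C ((d:ℝ) - (s:ℝ)) * X) * derivative Hp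
        - C ((m:ℝ) * ((m:ℝ) + (d:ℝ) - 2)) * Hp
        + C ((n:ℝ) * ((n:ℝ) + (d:ℝ) - (s:ℝ) - 1)) * X * Hp = 0) := by
  have hlam : (fun u : ℝ => jacobiJneg (2 * m + d - 2) s (n - m) (1 - 2 * u) * u ^ m)
      = fun u => eval u Hp := funext hfun
  have hd1 : deriv (fun u : ℝ => eval u Hp) = fun t => eval t (derivative Hp) :=
    funext fun t => Polynomial.deriv Hp
  constructor
  · intro h
    apply Polynomial.funext
    intro r
    have hr := h r
    rw [hlam, hd1, Polynomial.deriv, hfun r] at hr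
    simp only [eval_add, eval_sub, eval_mul, eval_pow, eval_C, eval_X, eval_one, eval_zero]
    linear_combination hr
  · intro hT t
    rw [hlam, hd1, Polynomial.deriv, hfun t]
    have := congrArg (eval t) hT
    simp only [eval_add, eval_sub, eval_mul, eval_pow, eval_C, eval_X, eval_one,
      eval_zero] at this
    linear_combination this





lemma poch_zero (x : ℝ) : poch x 0 = 1 := by simp [poch]

lemma poch_succ (x : ℝ) (k : ℕ) : poch x (k+1) = poch x k * (x + k) := by
  simp [poch, ascPochhammer_succ_right]

lemma poch_pos {x : ℝ} (hx : 0 < x) (k : ℕ) : 0 < poch x k := by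
  induction k with
  | zero => simp [poch_zero]
  | succ k ih => rw [poch_succ]; positivity

lemma poch_neg_nat (n k : ℕ) (h : n < k) : poch (-(n:ℝ)) k = 0 := by
  induction k with
  | zero => omega
  | succ k ih =>
    rw [poch_succ]
    rcases Nat.lt_succ_iff_lt_or_eq.mp h with h' | h'
    · rw [ih h', zero_mul]
    · subst h'; simp

/-- hypergeometric coefficients of the Jacobi polynomial (in the variable `(1-t)/2`). -/
def jA (a b : ℝ) (n k : ℕ) : ℝ :=
  poch (-(n:ℝ)) k * poch ((n:ℝ) + a + b + 1) k / ((k.factorial : ℝ) * poch (a+1) k)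

lemma jA_eq_zero {a b : ℝ} {n k : ℕ} (h : n < k) : jA a b n k = 0 := by
  simp [jA, poch_neg_nat n k h]

lemma jA_rec (a b : ℝ) (ha : 0 < a + 1) (n k : ℕ) :
    ((k:ℝ)+1) * (((k:ℝ)+1)+a) * jA a b n (k+1)
      = ((k:ℝ) - n) * ((k:ℝ) + n + a + b + 1) * jA a b n k := by
  have hfac : ((k.factorial : ℝ)) ≠ 0 := by positivity
  have hp : poch (a+1) k ≠ 0 := ne_of_gt (poch_pos ha k)
  have hak : (a + 1 + (k:ℝ)) ≠ 0 := by positivity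
  rw [jA, jA, poch_succ, poch_succ, poch_succ]
  push_cast [Nat.factorial_succ]
  field_simp
  ring

/-- the Jacobi polynomial in the variable `x = (1-t)/2` (without leading factor). -/
def Sx (a b : ℝ) (n : ℕ) : Polynomial ℝ :=
  ∑ k ∈ Finset.range (n+1), C (jA a b n k) * X ^ k

lemma Sx_coeff (a b : ℝ) (n j : ℕ) : (Sx a b n).coeff j = jA a b n j := by
  rw [Sx, finset_sum_coeff]
  simp only [coeff_C_mul, coeff_X_pow, mul_ite, mul_one, mul_zero]
  rw [Finset.sum_ite_eq (Finset.range (n+1)) j (fun k => jA a b n k)]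
  by_cases h : j ∈ Finset.range (n+1)
  · rw [if_pos h]
  · rw [if_neg h]
    exact (jA_eq_zero (by simpa using h)).symm

lemma Sx_ode (a b : ℝ) (ha : 0 < a + 1) (n : ℕ) :
    X * (1 - X) * derivative (derivative (Sx a b n))
      + (C (a+1) - C (a+b+2) * X) * derivative (Sx a b n)
      + C ((n:ℝ) * ((n:ℝ)+a+b+1)) * Sx a b n = 0 := by
  have h2 : ∀ i : ℕ, (derivative (derivative (Sx a b n))).coeff i
      = jA a b n (i+2) * ((i:ℝ)+2) * ((i:ℝ)+1) := by
    intro i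
    rw [coeff_derivative, coeff_derivative, Sx_coeff]
    push_cast; ring
  have h1 : ∀ i : ℕ, (derivative (Sx a b n)).coeff i = jA a b n (i+1) * ((i:ℝ)+1) := by
    intro i; rw [coeff_derivative, Sx_coeff]
  have hXX : X * (1 - X) * derivative (derivative (Sx a b n))
      + (C (a+1) - C (a+b+2) * X) * derivative (Sx a b n)
      + C ((n:ℝ) * ((n:ℝ)+a+b+1)) * Sx a b n
      = X * derivative (derivative (Sx a b n))
        - X * (X * derivative (derivative (Sx a b n)))
        + (C (a+1) * derivative (Sx a b n) - C (a+b+2) * (X * derivative (Sx a b n)))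
        + C ((n:ℝ) * ((n:ℝ)+a+b+1)) * Sx a b n := by ring
  rw [hXX]
  ext j
  simp only [coeff_add, coeff_sub, coeff_zero, coeff_C_mul]
  match j with
  | 0 =>
    simp only [mul_coeff_zero, coeff_X_zero, zero_mul, h1, Sx_coeff]
    have := jA_rec a b ha n 0
    push_cast at this ⊢
    linear_combination this
  | 1 =>
    rw [coeff_X_mul (derivative (derivative (Sx a b n))) 0,
      coeff_X_mul (X * derivative (derivative (Sx a b n))) 0,
      coeff_X_mul (derivative (Sx a b n)) 0,
      mul_coeff_zero, coeff_X_zero, h2, h1, h1, Sx_coeff]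
    have := jA_rec a b ha n 1
    push_cast at this ⊢
    linear_combination this
  | (j+2) =>
    rw [coeff_X_mul (derivative (derivative (Sx a b n))) (j+1),
      coeff_X_mul (X * derivative (derivative (Sx a b n))) (j+1),
      coeff_X_mul (derivative (derivative (Sx a b n))) j,
      coeff_X_mul (derivative (Sx a b n)) (j+1),
      h2, h2, h1, h1, Sx_coeff]
    have := jA_rec a b ha n (j+2)
    push_cast at this ⊢
    linear_combination this




def preant (p : Polynomial ℝ) : Polynomial ℝ :=
  p.sum (fun i a => C (a/((i:ℝ)+1)) * X ^ (i+1))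

def antider (p : Polynomial ℝ) : Polynomial ℝ := preant p - C ((preant p).eval (-1))

lemma derivative_preant (p : Polynomial ℝ) : derivative (preant p) = p := by
  rw [preant, Polynomial.sum, map_sum]
  have : ∀ i ∈ p.support, derivative (C (p.coeff i /((i:ℝ)+1)) * X ^ (i+1))
      = C (p.coeff i) * X ^ i := by
    intro i _
    rw [derivative_C_mul, derivative_X_pow]
    rw [← mul_assoc, ← C_mul]
    have h0 : (i:ℝ) + 1 ≠ 0 := by positivity
    push_cast
    rw [div_mul_cancel₀ _ h0]
  rw [Finset.sum_congr rfl this]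
  exact p.sum_C_mul_X_pow_eq

lemma derivative_antider (p : Polynomial ℝ) : derivative (antider p) = p := by
  rw [antider, map_sub, derivative_C, sub_zero, derivative_preant]

lemma antider_eval (p : Polynomial ℝ) : (antider p).eval (-1) = 0 := by
  simp [antider]

lemma derivative_iterate_antider (s : ℕ) (p : Polynomial ℝ) :
    derivative^[s] (antider^[s] p) = p := by
  induction s generalizing p with
  | zero => rfl
  | succ s ih =>
    rw [Function.iterate_succ_apply' antider, Function.iterate_succ_apply derivative,
      derivative_antider, ih]

lemma iterate_antider_eval {j s : ℕ} (h : j < s) (p : Polynomial ℝ) :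
    (derivative^[j] (antider^[s] p)).eval (-1) = 0 := by
  obtain ⟨r, rfl⟩ : ∃ r, s = j + (r + 1) := ⟨s - j - 1, by omega⟩
  rw [Function.iterate_add_apply antider j (r+1) p, derivative_iterate_antider,
    Function.iterate_succ_apply' antider, antider_eval]

/-- Taylor / FTC : the `s`-fold iterated integral of `derivative^[s] Q`. -/
lemma integral_eq_eval (Q : Polynomial ℝ) (s : ℕ) (hs : 1 ≤ s)
    (hc : ∀ j < s, (derivative^[j] Q).eval (-1) = 0) (t : ℝ) :
    (∫ u in (-1:ℝ)..t, (t-u) ^ (s-1) / (((s-1).factorial : ℝ)) * (derivative^[s] Q).eval u)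
      = Q.eval t := by
  set T : ℝ → ℝ := fun u => ∑ j ∈ Finset.range s,
    (derivative^[j] Q).eval u * (t-u) ^ j / (j.factorial : ℝ) with hT
  have hderiv : ∀ u : ℝ, HasDerivAt T
      ((t-u) ^ (s-1) / (((s-1).factorial : ℝ)) * (derivative^[s] Q).eval u) u := by
    intro u
    have hterm : ∀ j ∈ Finset.range s, HasDerivAt
        (fun u => (derivative^[j] Q).eval u * (t-u) ^ j / (j.factorial : ℝ))
        (((derivative^[j+1] Q).eval u * (t-u) ^ j
          + (derivative^[j] Q).eval u * ((j:ℝ) * (t-u) ^ (j-1) * (0-1))) / (j.factorial : ℝ)) u := by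
      intro j _
      have h1 : HasDerivAt (fun u : ℝ => (derivative^[j] Q).eval u)
          ((derivative^[j+1] Q).eval u) u := by
        have := (derivative^[j] Q).hasDerivAt u
        rwa [← Function.iterate_succ_apply' derivative] at this
      have h2 : HasDerivAt (fun u : ℝ => (t-u) ^ j) ((j:ℝ) * (t-u) ^ (j-1) * (0-1)) u :=
        ((hasDerivAt_const u t).sub (hasDerivAt_id u)).pow j
      exact (h1.mul h2).div_const _
    have := HasDerivAt.fun_sum hterm
    refine this.congr_deriv ?_
    symm
    have e1 : ∀ j ∈ Finset.range s,
        ((derivative^[j+1] Q).eval u * (t-u) ^ j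
          + (derivative^[j] Q).eval u * ((j:ℝ) * (t-u) ^ (j-1) * (0-1))) / (j.factorial : ℝ)
        = (derivative^[j+1] Q).eval u * (t-u) ^ j / (j.factorial : ℝ)
          - (derivative^[j] Q).eval u * ((j:ℝ) * (t-u) ^ (j-1)) / (j.factorial : ℝ) := by
      intro j _; ring
    rw [Finset.sum_congr rfl e1, Finset.sum_sub_distrib]
    have e2 : ∑ j ∈ Finset.range s,
        (derivative^[j] Q).eval u * ((j:ℝ) * (t-u) ^ (j-1)) / (j.factorial : ℝ)
        = ∑ j ∈ Finset.range (s-1),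
          (derivative^[j+1] Q).eval u * (t-u) ^ j / (j.factorial : ℝ) := by
      obtain ⟨r, rfl⟩ : ∃ r, s = r + 1 := ⟨s - 1, by omega⟩
      rw [Finset.sum_range_succ' _ r]
      simp only [Nat.cast_zero, zero_mul, mul_zero, zero_div, add_zero, Nat.add_sub_cancel]
      refine Finset.sum_congr rfl fun j _ => ?_
      have hj : ((j+1).factorial : ℝ) = ((j:ℝ)+1) * (j.factorial : ℝ) := by
        rw [Nat.factorial_succ]; push_cast; ring
      rw [hj]
      have h1 : (j.factorial : ℝ) ≠ 0 := by positivity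
      have h2 : ((j:ℝ)+1) ≠ 0 := by positivity
      field_simp
      push_cast
      ring
    rw [e2]
    obtain ⟨r, rfl⟩ : ∃ r, s = r + 1 := ⟨s - 1, by omega⟩
    rw [Finset.sum_range_succ]
    simp only [Nat.add_sub_cancel]
    ring
  have hcont : Continuous (fun u => (t-u) ^ (s-1) / (((s-1).factorial : ℝ))
      * (derivative^[s] Q).eval u) := by
    apply Continuous.mul
    · exact (((continuous_const).sub continuous_id).pow _).div_const _
    · exact (derivative^[s] Q).continuous
  rw [intervalIntegral.integral_eq_sub_of_hasDerivAt (fun u _ => hderiv u)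
    (hcont.intervalIntegrable _ _)]
  have hTt : T t = Q.eval t := by
    rw [hT]
    beta_reduce
    rw [Finset.sum_eq_single 0]
    · simp
    · intro j _ hj
      obtain ⟨i, rfl⟩ : ∃ i, j = i + 1 := ⟨j - 1, by omega⟩
      simp
    · intro h; exact absurd (Finset.mem_range.mpr (by omega)) h
  have hT1 : T (-1) = 0 := by
    rw [hT]
    beta_reduce
    refine Finset.sum_eq_zero fun j hj => ?_
    rw [hc j (Finset.mem_range.mp hj)]
    ring
  rw [hTt, hT1, sub_zero]



/-- The hypergeometric-type operator `x(1-x)y'' + (A - Bx)y' + lam y`. -/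
def Lop (A B lam : ℝ) (p : Polynomial ℝ) : Polynomial ℝ :=
  X * (1 - X) * derivative (derivative p) + (C A - C B * X) * derivative p + C lam * p

lemma derivative_Lop (A B lam : ℝ) (p : Polynomial ℝ) :
    derivative (Lop A B lam p) = Lop (A+1) (B+2) (lam - B) (derivative p) := by
  simp only [Lop, derivative_add, derivative_mul, derivative_one, derivative_X, derivative_sub,
    derivative_C, map_add, map_sub, map_one, map_ofNat]
  ring

lemma iterate_derivative_Lop (s : ℕ) (A B lam : ℝ) (p : Polynomial ℝ) :
    derivative^[s] (Lop A B lam p)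
      = Lop (A+s) (B+2*s) (lam - s*B - s*((s:ℝ)-1)) (derivative^[s] p) := by
  induction s generalizing A B lam p with
  | zero => simp [Lop]
  | succ s ih =>
    rw [Function.iterate_succ_apply derivative, derivative_Lop, ih,
      ← Function.iterate_succ_apply derivative]
    congr 1 <;> push_cast <;> ring

lemma eq_zero_of_iterate_derivative (s : ℕ) (E : Polynomial ℝ)
    (h1 : derivative^[s] E = 0) (h2 : ∀ j < s, (derivative^[j] E).eval 1 = 0) : E = 0 := by
  induction s generalizing E with
  | zero => exact h1
  | succ s ih =>
    have hd : derivative E = 0 := by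
      apply ih
      · rw [← Function.iterate_succ_apply derivative]; exact h1
      · intro j hj
        rw [← Function.iterate_succ_apply derivative]
        exact h2 (j+1) (by omega)
    have := Polynomial.eq_C_of_natDegree_eq_zero (natDegree_eq_zero_of_derivative_eq_zero hd)
    have h0 := h2 0 (by omega)
    simp only [Function.iterate_zero_apply] at h0
    rw [this, eval_C] at h0
    rw [this, h0, map_zero]

lemma X_mul_derivative_X_pow (m : ℕ) :
    X * derivative (X ^ m : Polynomial ℝ) = C (m:ℝ) * X ^ m := by
  cases m with
  | zero => simp
  | succ m => rw [derivative_X_pow]; push_cast; ring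

lemma X_sq_mul_derivative_derivative_X_pow (m : ℕ) :
    X^2 * derivative (derivative (X ^ m : Polynomial ℝ)) = C ((m:ℝ)*((m:ℝ)-1)) * X ^ m := by
  match m with
  | 0 => simp
  | 1 => simp
  | (m+2) =>
    rw [derivative_X_pow, show m+2-1 = m+1 from rfl, derivative_C_mul, derivative_X_pow,
      show m+1-1 = m from rfl]
    push_cast
    rw [C_mul, show ((m:ℝ)+2-1) = (m:ℝ)+1 by ring]
    ring

lemma one_sub_X_mul_derivative_pow (k : ℕ) :
    (1 - X) * derivative ((1 - X : Polynomial ℝ) ^ k) = - C (k:ℝ) * (1 - X) ^ k := by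
  cases k with
  | zero => simp
  | succ k =>
    rw [derivative_pow, show k+1-1 = k from rfl]
    have : derivative (1 - X : Polynomial ℝ) = -1 := by
      rw [derivative_sub, derivative_one, derivative_X]; ring
    rw [this]; push_cast; ring

lemma iterate_derivative_comp_linear (j : ℕ) (p : Polynomial ℝ) :
    derivative^[j] (p.comp (1 - 2*X)) = C ((-2:ℝ)^j) * (derivative^[j] p).comp (1 - 2*X) := by
  induction j generalizing p with
  | zero => simp
  | succ j ih =>
    have hd : derivative (1 - 2*X : Polynomial ℝ) = C (-2 : ℝ) := by
      simp
      rw [map_ofNat]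
    rw [Function.iterate_succ_apply derivative, derivative_comp, hd,
      Polynomial.iterate_derivative_C_mul, ih,
      Function.iterate_succ_apply derivative, pow_succ, map_mul]
    ring

lemma Lop_C_mul (A B lam c : ℝ) (p : Polynomial ℝ) :
    Lop A B lam (C c * p) = C c * Lop A B lam p := by
  simp only [Lop, derivative_C_mul]; ring

lemma Lop_eval_one (A B lam : ℝ) (p : Polynomial ℝ) :
    eval 1 (Lop A B lam p) = (A - B) * eval 1 (derivative p) + lam * eval 1 p := by
  simp only [Lop, eval_add, eval_mul, eval_sub, eval_one, eval_X, eval_C]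
  ring

lemma hard_case (d s n m : ℕ) (hd : 2 ≤ d) (hs : 1 ≤ s) (hm : m ≤ n) (hks : m + s ≤ n) :
    ∃ Hp : Polynomial ℝ,
      (∀ u : ℝ, jacobiJneg (2 * m + d - 2) s (n - m) (1 - 2 * u) * u ^ m = eval u Hp) ∧
      (X^2 * (1 - X) * derivative (derivative Hp)
        + X * (C ((d:ℝ) - 1) - C ((d:ℝ) - (s:ℝ)) * X) * derivative Hp
        - C ((m:ℝ) * ((m:ℝ) + (d:ℝ) - 2)) * Hp
        + C ((n:ℝ) * ((n:ℝ) + (d:ℝ) - (s:ℝ) - 1)) * X * Hp = 0) := by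
  set k := n - m with hk
  have hsk : s ≤ k := by omega
  set α : ℝ := 2 * (m:ℝ) + (d:ℝ) - 2 + (s:ℝ) with hα
  have hα1 : 0 < α + 1 := by
    have hd' : (2:ℝ) ≤ (d:ℝ) := by exact_mod_cast hd
    have hs' : (1:ℝ) ≤ (s:ℝ) := by exact_mod_cast hs
    have hm' : (0:ℝ) ≤ (m:ℝ) := by positivity
    simp only [hα]
    linarith
  set ν := k - s with hν
  set c0 : ℝ := jacobiA α 0 ν * (poch (α+1) ν / (ν.factorial : ℝ)) with hc0
  set PPu : Polynomial ℝ := C c0 * ((Sx α 0 ν).comp (C (1/2 : ℝ) * (1 - X))) with hPPu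
  have hPPu_eval : ∀ u : ℝ, eval u PPu = jacobiPhat α 0 ν u := by
    intro u
    rw [jacobiPhat, jacobiP, ← mul_assoc]
    simp only [hPPu, eval_mul, eval_C, eval_comp, eval_sub, eval_one, eval_X, Sx,
      eval_finset_sum, eval_pow]
    rw [← hc0, Finset.mul_sum, Finset.mul_sum]
    refine Finset.sum_congr rfl fun j _ => ?_
    simp only [jA]
    ring
  set Qs : Polynomial ℝ := antider^[s] PPu with hQs
  have hQd : derivative^[s] Qs = PPu := derivative_iterate_antider s PPu
  have hQj : ∀ j < s, eval (-1) (derivative^[j] Qs) = 0 := fun j hj =>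
    iterate_antider_eval hj PPu
  have hJ : ∀ v : ℝ, jacobiJ (2 * (m:ℝ) + (d:ℝ) - 2 + (s:ℕ)) 0 s k v = eval v Qs := by
    intro v
    rw [jacobiJ, if_neg (by omega : ¬ k < s)]
    have harg : (fun u => (v - u) ^ (s - 1) / ((s - 1).factorial : ℝ)
          * jacobiPhat (2 * (m:ℝ) + (d:ℝ) - 2 + (s:ℕ)) 0 (k - s) u)
        = fun u => (v - u) ^ (s-1) / (((s-1).factorial : ℝ)) * eval u (derivative^[s] Qs) := by
      funext u
      rw [hQd, hPPu_eval u]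
    rw [harg, integral_eq_eval Qs s hs hQj v]
  set Gt : Polynomial ℝ := Qs.comp (1 - 2*X) with hGt
  have hfun : ∀ u : ℝ, jacobiJneg (2 * m + d - 2) s (n - m) (1 - 2 * u) * u ^ m
      = eval u (Gt * X ^ m) := by
    intro u
    rw [jacobiJneg, ← hk, hJ (1 - 2*u), eval_mul, eval_pow, eval_X, hGt, eval_comp]
    norm_num
  -- the composed polynomial is a multiple of Sx
  have hcomp : PPu.comp (1 - 2*X) = C c0 * Sx α 0 ν := by
    rw [hPPu, mul_comp, C_comp, comp_assoc]
    congr 1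
    have : (C (1/2 : ℝ) * (1 - X)).comp (1 - 2*X) = X := by
      rw [mul_comp, C_comp, sub_comp, one_comp, X_comp]
      rw [show (1 : Polynomial ℝ) - (1 - 2*X) = C 2 * X by rw [map_ofNat]; ring]
      rw [← mul_assoc, ← C_mul]
      norm_num
    rw [this, comp_X]
  have hGts : derivative^[s] Gt = C ((-2:ℝ)^s * c0) * Sx α 0 ν := by
    rw [hGt, iterate_derivative_comp_linear, hQd, hcomp, ← mul_assoc, ← C_mul]
  -- the ODE satisfied by `derivative^[s] Gt`
  have hW : Lop (α+1) (α+0+2) ((ν:ℝ) * ((ν:ℝ)+α+0+1)) (derivative^[s] Gt) = 0 := by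
    rw [hGts, Lop_C_mul, Lop, Sx_ode α 0 hα1 ν, mul_zero]
  -- the ODE satisfied by Gt
  have hE : Lop (α - s + 1) (α - 2*s + 2) ((k:ℝ) * ((k:ℝ) + α - 2*s + 1)) Gt = 0 := by
    apply eq_zero_of_iterate_derivative s
    · rw [iterate_derivative_Lop]
      have e1 : α - (s:ℝ) + 1 + s = α + 1 := by ring
      have e2 : α - 2*(s:ℝ) + 2 + 2*s = α + 0 + 2 := by ring
      have e3 : (k:ℝ) * ((k:ℝ) + α - 2*s + 1) - s * (α - 2*(s:ℝ) + 2) - s*((s:ℝ)-1)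
          = (ν:ℝ) * ((ν:ℝ) + α + 0 + 1) := by
        have hν' : (ν:ℝ) = (k:ℝ) - (s:ℝ) := by rw [hν, Nat.cast_sub hsk]
        rw [hν']; ring
      rw [e1, e2, e3, hW]
    · intro j hj
      have hGj : ∀ i < s, eval 1 (derivative^[i] Gt) = 0 := by
        intro i hi
        rw [hGt, iterate_derivative_comp_linear, eval_mul, eval_C, eval_comp]
        have : eval 1 (1 - 2*X : Polynomial ℝ) = -1 := by
          simp
          norm_num
        rw [this, hQj i hi, mul_zero]
      rw [iterate_derivative_Lop, Lop_eval_one]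
      rw [← Function.iterate_succ_apply' derivative]
      by_cases hj1 : j + 1 < s
      · rw [hGj (j+1) hj1, hGj j hj, mul_zero, mul_zero, add_zero]
      · have hjs : j = s - 1 := by omega
        have hcast : (j:ℝ) = (s:ℝ) - 1 := by
          rw [hjs, Nat.cast_sub hs, Nat.cast_one]
        rw [hGj j hj, mul_zero, add_zero]
        rw [show α - (s:ℝ) + 1 + j - (α - 2*(s:ℝ) + 2 + 2*j) = (s:ℝ) - 1 - (j:ℝ) by ring,
          hcast]
        ring
  refine ⟨Gt * X ^ m, hfun, ?_⟩
  rw [Lop] at hE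
  -- expand derivatives of the product
  rw [derivative_mul, derivative_add, derivative_mul, derivative_mul]
  have hX1 := X_mul_derivative_X_pow m
  have hX2 := X_sq_mul_derivative_derivative_X_pow m
  have hkc : ((k:ℕ):ℝ) = (n:ℝ) - (m:ℝ) := by rw [hk, Nat.cast_sub hm]
  rw [hα, hkc] at hE
  simp only [map_mul, map_add, map_sub, map_one, map_ofNat, map_natCast] at hE hX1 hX2 ⊢
  linear_combination (X^(m+1)) * hE
    + (2*X*(1-X)*derivative Gt + (((d:Polynomial ℝ)) - 1 - ((d:Polynomial ℝ) - (s:Polynomial ℝ))*X)*Gt) * hX1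
    + ((1-X)*Gt) * hX2

lemma triv_case (d s m : ℕ) (hs : 1 ≤ s) :
    (∀ u : ℝ, jacobiJneg (2 * m + d - 2) s (m - m) (1 - 2 * u) * u ^ m
        = eval u ((X : Polynomial ℝ) ^ m)) ∧
    (X^2 * (1 - X) * derivative (derivative ((X : Polynomial ℝ)^m))
      + X * (C ((d:ℝ) - 1) - C ((d:ℝ) - (s:ℝ)) * X) * derivative ((X : Polynomial ℝ)^m)
      - C ((m:ℝ) * ((m:ℝ) + (d:ℝ) - 2)) * (X : Polynomial ℝ)^m
      + C ((m:ℝ) * ((m:ℝ) + (d:ℝ) - (s:ℝ) - 1)) * X * (X : Polynomial ℝ)^m = 0) := by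
  constructor
  · intro u
    rw [jacobiJneg, Nat.sub_self, jacobiJ, if_pos (by omega : 0 < s)]
    simp
  · have hX1 := X_mul_derivative_X_pow m
    have hX2 := X_sq_mul_derivative_derivative_X_pow m
    simp only [map_mul, map_add, map_sub, map_one, map_ofNat, map_natCast] at hX1 hX2 ⊢
    linear_combination (1-X) * hX2
      + ((d : Polynomial ℝ) - 1 - ((d : Polynomial ℝ) - (s : Polynomial ℝ))*X) * hX1

lemma fail_case (d s n m : ℕ) (hs : 1 ≤ s) (hmn : m < n) (hlt : n < m + s)
    (hEq : ∀ t : ℝ,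
      t ^ 2 * (1 - t) *
            deriv (deriv (fun u => jacobiJneg (2 * m + d - 2) s (n - m) (1 - 2 * u) * u ^ m)) t
          + t * ((d : ℝ) - 1 - ((d : ℝ) - s) * t) *
              deriv (fun u => jacobiJneg (2 * m + d - 2) s (n - m) (1 - 2 * u) * u ^ m) t
          - (m : ℝ) * ((m : ℝ) + d - 2) *
              (jacobiJneg (2 * m + d - 2) s (n - m) (1 - 2 * t) * t ^ m)
        = -(n : ℝ) * ((n : ℝ) + d - s - 1) * t *
            (jacobiJneg (2 * m + d - 2) s (n - m) (1 - 2 * t) * t ^ m)) : False := by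
  set k := n - m with hk
  obtain ⟨j, hj⟩ : ∃ j, k = j + 1 := ⟨k - 1, by omega⟩
  set c : ℝ := (2:ℝ)^k / (k.factorial : ℝ) with hc
  set Hp : Polynomial ℝ := C c * ((1 - X)^k * X^m) with hHp
  have hfun : ∀ u : ℝ, jacobiJneg (2 * m + d - 2) s (n - m) (1 - 2 * u) * u ^ m
      = eval u Hp := by
    intro u
    rw [jacobiJneg, ← hk, jacobiJ, if_pos (by omega : k < s), hHp]
    simp only [eval_mul, eval_C, eval_pow, eval_sub, eval_one, eval_X]
    rw [show (1:ℝ) + (1 - 2*u) = 2 * (1-u) by ring, mul_pow, hc]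
    ring
  have hT := (key_iff d s n m Hp hfun).mp hEq
  -- derivative computations
  have hdd : derivative (1 - X : Polynomial ℝ) = -1 := by simp
  have hd1 : derivative ((1 - X : Polynomial ℝ)^(j+1)) = -(C ((j:ℝ)+1)) * (1-X)^j := by
    rw [derivative_pow, show j+1-1 = j from rfl, hdd]
    push_cast; ring
  have hd2 : (1 - X : Polynomial ℝ) * derivative ((1 - X : Polynomial ℝ)^j)
      = - C (j:ℝ) * (1-X)^j := one_sub_X_mul_derivative_pow j
  have hX1 := X_mul_derivative_X_pow m
  have hX2 := X_sq_mul_derivative_derivative_X_pow m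
  -- factor the polynomial
  have hfact : X^2 * (1 - X) * derivative (derivative Hp)
        + X * (C ((d:ℝ) - 1) - C ((d:ℝ) - (s:ℝ)) * X) * derivative Hp
        - C ((m:ℝ) * ((m:ℝ) + (d:ℝ) - 2)) * Hp
        + C ((n:ℝ) * ((n:ℝ) + (d:ℝ) - (s:ℝ) - 1)) * X * Hp
      = C c * (X^m * ((1-X)^j *
        (C ((m:ℝ)*((m:ℝ)-1))*(1-X)^2 - C (2*(m:ℝ)*((k:ℕ):ℝ))*(X*(1-X))
          + C (((k:ℕ):ℝ)*(((k:ℕ):ℝ)-1))*X^2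
          + C ((m:ℝ)*((d:ℝ)-1))*(1-X) - C (((k:ℕ):ℝ)*((d:ℝ)-1))*X
          - C ((m:ℝ)*((d:ℝ)-(s:ℝ)))*(X*(1-X)) + C (((k:ℕ):ℝ)*((d:ℝ)-(s:ℝ)))*X^2
          - C ((m:ℝ)*((m:ℝ)+(d:ℝ)-2))*(1-X)
          + C ((n:ℝ)*((n:ℝ)+(d:ℝ)-(s:ℝ)-1))*(X*(1-X))))) := by
    rw [hHp, hj]
    simp only [derivative_C_mul, derivative_mul, derivative_add, derivative_neg, derivative_C, derivative_one, derivative_natCast, derivative_zero, hd1]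
    simp only [map_mul, map_add, map_sub, map_one, map_ofNat, map_natCast, map_neg] at hd2 hX1 hX2 ⊢
    push_cast
    linear_combination (C c * X^2 * X^m * (-((j:Polynomial ℝ)+1))) * hd2
      + (C c * (-2*((j:Polynomial ℝ)+1)*(1-X)^(j+1)*X
          + ((d:Polynomial ℝ) - 1 - ((d:Polynomial ℝ) - (s:Polynomial ℝ))*X)*(1-X)^(j+1))) * hX1
      + (C c * (1-X)^(j+2)) * hX2
  rw [hT] at hfact
  have hc0 : C c ≠ 0 := by
    simp only [ne_eq, C_eq_zero]
    positivity
  have hXm : (X : Polynomial ℝ)^m ≠ 0 := pow_ne_zero _ X_ne_zero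
  have h1X : ((1 : Polynomial ℝ) - X)^j ≠ 0 := by
    apply pow_ne_zero
    intro h
    have := congrArg (eval 0) h
    simp at this
  have hA := (mul_eq_zero.mp hfact.symm).resolve_left hc0
  have hA := (mul_eq_zero.mp hA).resolve_left hXm
  have hA := (mul_eq_zero.mp hA).resolve_left h1X
  have heval := congrArg (eval 1) hA
  simp only [eval_add, eval_sub, eval_mul, eval_pow, eval_C, eval_X, eval_one, eval_zero] at heval
  have hks : (k:ℝ) * ((k:ℝ) - (s:ℝ)) = 0 := by linear_combination heval
  have hk1 : (1:ℝ) ≤ (k:ℝ) := by exact_mod_cast (by omega : 1 ≤ k)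
  have hks2 : (k:ℝ) < (s:ℝ) := by exact_mod_cast (by omega : k < s)
  nlinarith [hks, hk1, hks2]

/-- the Sobolev orthogonal polynomial `S_{m,Y}^{n,(-1,-s)}` is an eigenfunction
of `D_{-s}` (with eigenvalue `-n(n+d-s-1)`) exactly when `m ≤ n-s` or `m = n`. -/

theorem sobolev_eigen_iff (d : ℕ) (hd : 2 ≤ d) (s : ℕ) (hs : 1 ≤ s) (n m : ℕ) (hm : m ≤ n) :
    (∀ t : ℝ,
      t ^ 2 * (1 - t) *
            deriv (deriv (fun u => jacobiJneg (2 * m + d - 2) s (n - m) (1 - 2 * u) * u ^ m)) t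
          + t * ((d : ℝ) - 1 - ((d : ℝ) - s) * t) *
              deriv (fun u => jacobiJneg (2 * m + d - 2) s (n - m) (1 - 2 * u) * u ^ m) t
          - (m : ℝ) * ((m : ℝ) + d - 2) *
              (jacobiJneg (2 * m + d - 2) s (n - m) (1 - 2 * t) * t ^ m)
        = -(n : ℝ) * ((n : ℝ) + d - s - 1) * t *
            (jacobiJneg (2 * m + d - 2) s (n - m) (1 - 2 * t) * t ^ m))
    ↔ (m + s ≤ n ∨ m = n) := by
  rcases Nat.lt_or_ge n (m + s) with hlt | hge
  · rcases Nat.lt_or_ge m n with hmn | hge2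
    · apply iff_of_false
      · intro hEq; exact fail_case d s n m hs hmn hlt hEq
      · rintro (h | h) <;> omega
    · have hmn : m = n := le_antisymm hm hge2
      subst hmn
      exact iff_of_true ((key_iff d s m m _ (triv_case d s m hs).1).mpr (triv_case d s m hs).2)
        (Or.inr rfl)
  · obtain ⟨Hp, h1, h2⟩ := hard_case d s n m hd hs hm hge
    exact iff_of_true ((key_iff d s n m Hp h1).mpr h2) (Or.inl hge)

end
end

section
/- Let d ≥ 2 be an integer, n ∈ ℕ and 0 ≤ m ≤ n, and set h(t) = J_{n−m}^{(2m+d−2, −1)}(1−2t) · t^m (the case s = 1). Then for all real t: t²(1−t) h″(t) + t(d−1)(1−t) h′(t) − m(m+d−2) h(t) = −n(n+d−2) · t · h(t). Consequently every polynomial in the span of the Sobolev orthogonal basis of degree n for the inner product ⟨·,·⟩_{−1,−1} on the conic surface is an eigenfunction of the operator D_{−1} with eigenvalue −n(n+d−2). -/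
open MeasureTheory Finset

noncomputable section

namespace SobolevAux

def hgC (A B c : ℝ) (j : ℕ) : ℝ := poch A j * poch B j / ((j.factorial : ℝ) * poch c j)

def hgF (A B c : ℝ) (N : ℕ) (z : ℝ) : ℝ :=
  ∑ j ∈ Finset.range (N + 1), hgC A B c j * z ^ j

def hgF₁ (A B c : ℝ) (N : ℕ) (z : ℝ) : ℝ :=
  ∑ j ∈ Finset.range (N + 1), hgC A B c j * ((j : ℝ) * z ^ (j - 1))

def hgF₂ (A B c : ℝ) (N : ℕ) (z : ℝ) : ℝ :=
  ∑ j ∈ Finset.range (N + 1), hgC A B c j * ((j : ℝ) * (((j - 1 : ℕ) : ℝ) * z ^ (j - 2)))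

lemma poch_zero (x : ℝ) : poch x 0 = 1 := by simp [poch, ascPochhammer]

lemma poch_succ (x : ℝ) (k : ℕ) : poch x (k + 1) = poch x k * (x + k) := by
  simp [poch, ascPochhammer_succ_right]

lemma poch_pos {x : ℝ} (hx : 0 < x) (k : ℕ) : 0 < poch x k := by
  induction k with
  | zero => simp [poch_zero]
  | succ k ih => rw [poch_succ]; positivity

lemma hgC_rec {A B c : ℝ} (hc : 0 < c) (j : ℕ) :
    ((j : ℝ) + 1) * (c + j) * hgC A B c (j + 1) = (A + j) * (B + j) * hgC A B c j := by
  have h1 : ((j.factorial : ℝ)) ≠ 0 := by exact_mod_cast j.factorial_ne_zero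
  have h2 : poch c j ≠ 0 := (poch_pos hc j).ne'
  have h3 : c + (j : ℝ) ≠ 0 := by positivity
  unfold hgC
  rw [poch_succ, poch_succ, poch_succ, Nat.factorial_succ]
  push_cast
  field_simp

lemma termwise (A B c : ℝ) (j : ℕ) (z : ℝ) :
    z * (1 - z) * (hgC A B c j * ((j : ℝ) * (((j - 1 : ℕ) : ℝ) * z ^ (j - 2))))
      + (c - (A + B + 1) * z) * (hgC A B c j * ((j : ℝ) * z ^ (j - 1)))
      - A * B * (hgC A B c j * z ^ j)
    = (j : ℝ) * ((j : ℝ) - 1 + c) * hgC A B c j * z ^ (j - 1)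
      - (A + j) * (B + j) * hgC A B c j * z ^ j := by
  match j with
  | 0 => push_cast; ring_nf
  | 1 => push_cast; ring_nf
  | (i + 2) =>
    have e1 : i + 2 - 1 = i + 1 := rfl
    have e2 : i + 2 - 2 = i := rfl
    rw [e1, e2]
    push_cast
    ring

lemma hgF_ode {A B c : ℝ} (N : ℕ) (hc : 0 < c) (hA : A + N = 0) (z : ℝ) :
    z * (1 - z) * hgF₂ A B c N z + (c - (A + B + 1) * z) * hgF₁ A B c N z
      - A * B * hgF A B c N z = 0 := by
  unfold hgF hgF₁ hgF₂
  rw [Finset.mul_sum, Finset.mul_sum, Finset.mul_sum, ← Finset.sum_add_distrib,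
    ← Finset.sum_sub_distrib]
  have hterm : ∀ j ∈ Finset.range (N + 1),
      z * (1 - z) * (hgC A B c j * ((j : ℝ) * (((j - 1 : ℕ) : ℝ) * z ^ (j - 2))))
        + (c - (A + B + 1) * z) * (hgC A B c j * ((j : ℝ) * z ^ (j - 1)))
        - A * B * (hgC A B c j * z ^ j)
      = (j : ℝ) * ((j : ℝ) - 1 + c) * hgC A B c j * z ^ (j - 1)
        - (A + j) * (B + j) * hgC A B c j * z ^ j := fun j _ => termwise A B c j z
  rw [Finset.sum_congr rfl hterm, Finset.sum_sub_distrib]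
  have first : ∑ j ∈ Finset.range (N + 1),
      (j : ℝ) * ((j : ℝ) - 1 + c) * hgC A B c j * z ^ (j - 1)
      = ∑ i ∈ Finset.range N, (A + i) * (B + i) * hgC A B c i * z ^ i := by
    rw [Finset.sum_range_succ']
    simp only [Nat.cast_zero, zero_mul, pow_zero, add_zero, Nat.add_sub_cancel]
    refine Finset.sum_congr rfl fun i _ => ?_
    have h := hgC_rec (A := A) (B := B) hc i
    push_cast
    linear_combination z ^ i * h
  have second : ∑ j ∈ Finset.range (N + 1),
      (A + j) * (B + j) * hgC A B c j * z ^ j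
      = ∑ i ∈ Finset.range N, (A + i) * (B + i) * hgC A B c i * z ^ i := by
    rw [Finset.sum_range_succ]
    have hAN : A + (N : ℝ) = 0 := hA
    rw [hAN]
    ring
  rw [first, second, sub_self]

lemma hgF_hasDerivAt (A B c : ℝ) (N : ℕ) (z : ℝ) :
    HasDerivAt (hgF A B c N) (hgF₁ A B c N z) z := by
  unfold hgF hgF₁
  exact HasDerivAt.fun_sum fun j _ => (hasDerivAt_pow j z).const_mul _

lemma hgF₁_hasDerivAt (A B c : ℝ) (N : ℕ) (z : ℝ) :
    HasDerivAt (hgF₁ A B c N) (hgF₂ A B c N z) z := by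
  unfold hgF₁ hgF₂
  refine HasDerivAt.fun_sum fun j _ => ?_
  have : j - 1 - 1 = j - 2 := by omega
  simpa [this] using (((hasDerivAt_pow (j - 1) z).const_mul (j : ℝ)).const_mul (hgC A B c j))

lemma hgF_continuous (A B c : ℝ) (N : ℕ) : Continuous (hgF A B c N) := by
  unfold hgF
  exact continuous_finset_sum _ fun j _ => continuous_const.mul (continuous_pow j)

lemma jacobiP_eq (a b : ℝ) (n : ℕ) (t : ℝ) :
    jacobiP a b n t
      = poch (a + 1) n / (n.factorial : ℝ) *
          hgF (-(n : ℝ)) ((n : ℝ) + a + b + 1) (a + 1) n ((1 - t) / 2) := rfl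

lemma jacobiPhat_eq (a b : ℝ) (n : ℕ) (u : ℝ) :
    jacobiPhat a b n u
      = jacobiA a b n * (poch (a + 1) n / (n.factorial : ℝ)) *
          hgF (-(n : ℝ)) ((n : ℝ) + a + b + 1) (a + 1) n ((1 - u) / 2) := by
  rw [jacobiPhat, jacobiP_eq, mul_assoc]

lemma jacobiPhat_flip (a b : ℝ) (n : ℕ) (t : ℝ) :
    jacobiPhat a b n (1 - 2 * t)
      = jacobiA a b n * (poch (a + 1) n / (n.factorial : ℝ)) *
          hgF (-(n : ℝ)) ((n : ℝ) + a + b + 1) (a + 1) n t := by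
  rw [jacobiPhat_eq]
  congr 1
  ring

lemma jacobiPhat_continuous (a b : ℝ) (n : ℕ) : Continuous (jacobiPhat a b n) := by
  have : jacobiPhat a b n = fun u =>
      jacobiA a b n * (poch (a + 1) n / (n.factorial : ℝ)) *
        hgF (-(n : ℝ)) ((n : ℝ) + a + b + 1) (a + 1) n ((1 - u) / 2) := by
    funext u; exact jacobiPhat_eq a b n u
  rw [this]
  exact continuous_const.mul ((hgF_continuous _ _ _ _).comp (by continuity))

lemma Jg_eq (a : ℝ) (N : ℕ) (x : ℝ) :
    jacobiJneg a 1 (N + 1) x = ∫ u in (-1 : ℝ)..x, jacobiPhat (a + 1) 0 N u := by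
  rw [jacobiJneg, jacobiJ, if_neg (by omega)]
  push_cast
  simp

/-- derivative of `t ↦ J_{N+1}^{(a,-1)}(1-2t)`. -/
lemma Jg_hasDerivAt (a : ℝ) (N : ℕ) (t : ℝ) :
    HasDerivAt (fun u => jacobiJneg a 1 (N + 1) (1 - 2 * u))
      (-2 * jacobiPhat (a + 1) 0 N (1 - 2 * t)) t := by
  have hQ : HasDerivAt (fun x => ∫ u in (-1 : ℝ)..x, jacobiPhat (a + 1) 0 N u)
      (jacobiPhat (a + 1) 0 N (1 - 2 * t)) (1 - 2 * t) :=
    ((jacobiPhat_continuous (a + 1) 0 N).integral_hasStrictDerivAt (-1) (1 - 2 * t)).hasDerivAt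
  have hinner : HasDerivAt (fun u : ℝ => 1 - 2 * u) (-2) t := by
    simpa using (hasDerivAt_const t (1 : ℝ)).fun_sub ((hasDerivAt_id t).const_mul (2 : ℝ))
  have := hQ.comp t hinner
  have heq : (fun u => jacobiJneg a 1 (N + 1) (1 - 2 * u))
      = fun u => ∫ v in (-1 : ℝ)..(1 - 2 * u), jacobiPhat (a + 1) 0 N v := by
    funext u; exact Jg_eq a N (1 - 2 * u)
  rw [heq]
  simpa [mul_comm, Function.comp_def] using this

lemma key (a : ℝ) (ha : 0 ≤ a) (N : ℕ) :
    ∃ G1 G2 : ℝ → ℝ,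
      (∀ t, HasDerivAt (fun u => jacobiJneg a 1 (N + 1) (1 - 2 * u)) (G1 t) t) ∧
      (∀ t, HasDerivAt G1 (G2 t) t) ∧
      (∀ t : ℝ, t * (1 - t) * G2 t + (a + 1) * (1 - t) * G1 t
          + ((N : ℝ) + 1) * (((N : ℝ) + 1) + a) * jacobiJneg a 1 (N + 1) (1 - 2 * t) = 0) := by
  set A : ℝ := -(N : ℝ) with hA
  set B : ℝ := (N : ℝ) + (a + 1) + 0 + 1 with hB
  set c : ℝ := a + 1 + 1 with hc
  set K : ℝ := jacobiA (a + 1) 0 N * (poch (a + 1 + 1) N / (N.factorial : ℝ)) with hK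
  have hc0 : 0 < c := by rw [hc]; linarith
  have hAN : A + (N : ℝ) = 0 := by rw [hA]; ring
  refine ⟨fun t => -2 * K * hgF A B c N t, fun t => -2 * K * hgF₁ A B c N t, ?_, ?_, ?_⟩
  · intro t
    have := Jg_hasDerivAt a N t
    rw [jacobiPhat_flip] at this
    convert this using 1
    rw [hK, hA, hB, hc]; ring
  · intro t
    exact (hgF_hasDerivAt A B c N t).const_mul _
  · -- the combination L is constant with value 0
    intro t
    set g : ℝ → ℝ := fun u => jacobiJneg a 1 (N + 1) (1 - 2 * u) with hg
    set L : ℝ → ℝ := fun t => t * (1 - t) * (-2 * K * hgF₁ A B c N t)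
        + (a + 1) * (1 - t) * (-2 * K * hgF A B c N t)
        + ((N : ℝ) + 1) * (((N : ℝ) + 1) + a) * g t with hL
    have hLd : ∀ s : ℝ, HasDerivAt L 0 s := by
      intro s
      have h1 : HasDerivAt (fun t : ℝ => t * (1 - t) * (-2 * K * hgF₁ A B c N t))
          ((1 - 2 * s) * (-2 * K * hgF₁ A B c N s)
            + s * (1 - s) * (-2 * K * hgF₂ A B c N s)) s := by
        have ha1 : HasDerivAt (fun t : ℝ => t * (1 - t)) (1 - 2 * s) s := by
          have := (hasDerivAt_id s).fun_mul ((hasDerivAt_const s (1 : ℝ)).fun_sub (hasDerivAt_id s))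
          simpa using this.congr_deriv (by simp; try ring)
        exact ha1.mul ((hgF₁_hasDerivAt A B c N s).const_mul _)
      have h2 : HasDerivAt (fun t : ℝ => (a + 1) * (1 - t) * (-2 * K * hgF A B c N t))
          (-(a + 1) * (-2 * K * hgF A B c N s)
            + (a + 1) * (1 - s) * (-2 * K * hgF₁ A B c N s)) s := by
        have ha2 : HasDerivAt (fun t : ℝ => (a + 1) * (1 - t)) (-(a + 1)) s := by
          have := ((hasDerivAt_const s (1 : ℝ)).fun_sub (hasDerivAt_id s)).const_mul (a + 1)
          simpa using this.congr_deriv (by simp; try ring)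
        exact ha2.mul ((hgF_hasDerivAt A B c N s).const_mul _)
      have h3 : HasDerivAt (fun t : ℝ => ((N : ℝ) + 1) * (((N : ℝ) + 1) + a) * g t)
          (((N : ℝ) + 1) * (((N : ℝ) + 1) + a) * (-2 * K * hgF A B c N s)) s := by
        have := (Jg_hasDerivAt a N s)
        rw [jacobiPhat_flip] at this
        have hval : -2 * (jacobiA (a + 1) 0 N * (poch (a + 1 + 1 + 1 - 1) N / (N.factorial : ℝ))
            * hgF (-(N : ℝ)) ((N : ℝ) + (a + 1) + 0 + 1) (a + 1 + 1) N s) = -2 * K * hgF A B c N s := by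
          rw [hK, hA, hB, hc]; ring_nf
        refine ((this.congr_deriv ?_).const_mul _)
        rw [hK, hA, hB, hc]; ring
      have := (h1.add h2).add h3
      refine this.congr_deriv ?_
      have hode := hgF_ode (A := A) (B := B) (c := c) N hc0 hAN s
      have hABc : A * B = -(((N : ℝ)) * ((N : ℝ) + a + 2)) := by rw [hA, hB]; ring
      rw [hB, hc] at hode ⊢
      rw [hA] at hode ⊢
      linear_combination (-2 * K) * hode
    have hconst : L t = L 1 :=
      is_const_of_deriv_eq_zero (fun s => (hLd s).differentiableAt)
        (fun s => (hLd s).deriv) t 1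
    have hL1 : L 1 = 0 := by
      have hg1 : g 1 = 0 := by
        show jacobiJneg a 1 (N + 1) (1 - 2 * 1) = 0
        rw [show (1 : ℝ) - 2 * 1 = -1 by norm_num, Jg_eq, intervalIntegral.integral_same]
      rw [hL]
      simp only [hg1]
      ring
    have := hconst.trans hL1
    rw [hL] at this
    exact this
  
end SobolevAux

/-- case `s = 1`: every Sobolev orthogonal polynomial of degree `n` for
`⟨·,·⟩_{-1,-1}` is an eigenfunction of `D_{-1}` with eigenvalue `-n(n+d-2)`, expressed through
the one-variable identity for `h(t) = J_{n-m}^{(2m+d-2,-1)}(1-2t) t^m`. -/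
theorem sobolev_eigen_s_one (d : ℕ) (hd : 2 ≤ d) (n m : ℕ) (hm : m ≤ n) (t : ℝ) :
    t ^ 2 * (1 - t) *
          deriv (deriv (fun u => jacobiJneg (2 * m + d - 2) 1 (n - m) (1 - 2 * u) * u ^ m)) t
        + t * ((d : ℝ) - 1) * (1 - t) *
            deriv (fun u => jacobiJneg (2 * m + d - 2) 1 (n - m) (1 - 2 * u) * u ^ m) t
        - (m : ℝ) * ((m : ℝ) + d - 2) *
            (jacobiJneg (2 * m + d - 2) 1 (n - m) (1 - 2 * t) * t ^ m)
      = -(n : ℝ) * ((n : ℝ) + d - 2) * t *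
          (jacobiJneg (2 * m + d - 2) 1 (n - m) (1 - 2 * t) * t ^ m) := by
  have hd2 : (2 : ℝ) ≤ (d : ℝ) := by exact_mod_cast hd
  have hm0 : (0 : ℝ) ≤ (m : ℝ) := Nat.cast_nonneg m
  rcases Nat.eq_zero_or_pos (n - m) with hk | hk
  · -- case n = m
    have hnm : n = m := by omega
    subst hnm
    have hJ : ∀ x : ℝ, jacobiJneg (2 * (n : ℝ) + (d : ℝ) - 2) 1 0 x = 1 := by
      intro x; simp [jacobiJneg, jacobiJ]
    simp only [hk, hJ, one_mul]
    have hder1 : deriv (fun u : ℝ => u ^ n) = fun s : ℝ => (n : ℝ) * s ^ (n - 1) :=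
      funext fun s => (hasDerivAt_pow n s).deriv
    rw [hder1]
    rw [show deriv (fun s : ℝ => (n : ℝ) * s ^ (n - 1)) t
        = (n : ℝ) * (((n - 1 : ℕ) : ℝ) * t ^ (n - 1 - 1)) from
      (((hasDerivAt_pow (n - 1) t).const_mul ((n : ℝ)))).deriv]
    match n with
    | 0 => norm_num
    | 1 => norm_num; ring
    | (i + 2) =>
      simp only [Nat.add_sub_cancel, show i + 2 - 1 = i + 1 from rfl,
        show i + 1 - 1 = i from rfl]
      beta_reduce
      push_cast
      ring
  · -- main case
    obtain ⟨N, hk2⟩ : ∃ N, n - m = N + 1 := ⟨n - m - 1, by omega⟩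
    have hn' : n = m + (N + 1) := by omega
    subst hn'
    have ha : (0 : ℝ) ≤ 2 * (m : ℝ) + (d : ℝ) - 2 := by linarith
    obtain ⟨G1, G2, hG1, hG2, hode⟩ := SobolevAux.key (2 * (m : ℝ) + (d : ℝ) - 2) ha N
    simp only [hk2]
    have hder1 : deriv (fun u => jacobiJneg (2 * (m : ℝ) + (d : ℝ) - 2) 1 (N + 1) (1 - 2 * u) * u ^ m)
        = fun s => G1 s * s ^ m
            + jacobiJneg (2 * (m : ℝ) + (d : ℝ) - 2) 1 (N + 1) (1 - 2 * s) * ((m : ℝ) * s ^ (m - 1)) :=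
      funext fun s => ((hG1 s).mul (hasDerivAt_pow m s)).deriv
    rw [hder1]
    rw [show deriv (fun s => G1 s * s ^ m
          + jacobiJneg (2 * (m : ℝ) + (d : ℝ) - 2) 1 (N + 1) (1 - 2 * s) * ((m : ℝ) * s ^ (m - 1))) t
        = G2 t * t ^ m + G1 t * ((m : ℝ) * t ^ (m - 1))
          + (G1 t * ((m : ℝ) * t ^ (m - 1))
            + jacobiJneg (2 * (m : ℝ) + (d : ℝ) - 2) 1 (N + 1) (1 - 2 * t)
                * ((m : ℝ) * (((m - 1 : ℕ) : ℝ) * t ^ (m - 1 - 1)))) from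
      (((hG2 t).mul (hasDerivAt_pow m t)).add
        ((hG1 t).mul ((hasDerivAt_pow (m - 1) t).const_mul ((m : ℝ))))).deriv]
    have hode' := hode t
    match m with
    | 0 =>
      beta_reduce
      push_cast at hode' ⊢
      norm_num at hode' ⊢
      linear_combination t * hode'
    | 1 =>
      beta_reduce
      push_cast at hode' ⊢
      norm_num at hode' ⊢
      linear_combination t ^ 2 * hode'
    | (i + 2) =>
      simp only [Nat.add_sub_cancel, show i + 2 - 1 = i + 1 from rfl,
        show i + 1 - 1 = i from rfl, show i + 2 - 1 - 1 = i from rfl]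
      beta_reduce
      push_cast at hode' ⊢
      linear_combination t ^ (i + 3) * hode'

end
end
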